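/- Let p1, p3, p4 ∈ ℂ[v,y] ⊂ S, q1, q3, q4 ∈ ℂ[v] ⊂ S and k1, k3, k4 ∈ ℂ. Set E1 = (−v²y² + p1·t)∂_y + q1·t·∂_v + k1·t·∂_t, E3 = p3·t·∂_y + (1 + q3·t)∂_v + k3·t·∂_t and E4 = (−v·y² + p4·t)∂_y + q4·t·∂_v + k4·t·∂_t. If [E1,E3] ≡ −2·E4 (mod t²), then k4 = 0 and −∂_v q1 + k1·q3 − k3·q1 = −2·q4 in ℂ[v]. -/
import Mathlib


open MvPolynomial

noncomputable section

/-- `S = ℂ[v,y,t]` with `v = X 0`, `y = X 1`, `t = X 2`. -/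
abbrev S : Type := MvPolynomial (Fin 3) ℂ

/-- The variable `v`. -/ def V : S := X 0
/-- The variable `y`. -/ def Y : S := X 1
/-- The variable `t`. -/ def T : S := X 2

/-- The derivation `f ∂_y + g ∂_v + h ∂_t` of `S = ℂ[v,y,t]`, determined by
`y ↦ f`, `v ↦ g`, `t ↦ h`. -/
def der (f g h : S) : Derivation ℂ S S :=
  MvPolynomial.mkDerivation ℂ ![g, f, h]

/-- The inclusion `ℂ[v,y] ⊂ S` (where in `ℂ[v,y]` the variable `X 0` is `v`
and `X 1` is `y`). -/
def ι2 : MvPolynomial (Fin 2) ℂ →ₐ[ℂ] S := aeval ![V, Y]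

/-- The inclusion `ℂ[v] ⊂ S`. -/
def ι1 : Polynomial ℂ →ₐ[ℂ] S := Polynomial.aeval V

/-- `D ≡ D' (mod t²)`: the difference sends `y`, `v`, `t` into the ideal `(t²)`. -/
def ModT2 (D D' : Derivation ℂ S S) : Prop :=
  ∀ i : Fin 3, (D - D') (X i) ∈ Ideal.span {T ^ 2}

lemma der_v (f g h : S) : der f g h V = g := by
  simp [der, V, MvPolynomial.mkDerivation_X]

lemma der_t (f g h : S) : der f g h T = h := by
  simp [der, T, MvPolynomial.mkDerivation_X]

lemma key (A : Polynomial ℂ) (hA : ι1 A * T ∈ Ideal.span {T ^ 2}) : A = 0 := by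
  rw [Ideal.mem_span_singleton] at hA
  obtain ⟨c, hc⟩ := hA
  have hT : (T : S) ≠ 0 := MvPolynomial.X_ne_zero 2
  have h1 : ι1 A = c * T := by
    apply mul_right_cancel₀ hT
    rw [hc]; ring
  have := congrArg (MvPolynomial.aeval ![Polynomial.X, 0, 0] : S →ₐ[ℂ] Polynomial ℂ) h1
  rw [ι1] at this
  rw [map_mul, ← Polynomial.aeval_algHom_apply] at this
  simpa [V, T] using this

theorem bracket_E1_E3 (p1 p3 p4 : MvPolynomial (Fin 2) ℂ) (q1 q3 q4 : Polynomial ℂ)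
    (k1 k3 k4 : ℂ) (E1 E3 E4 : Derivation ℂ S S)
    (hE1 : E1 = der (-V ^ 2 * Y ^ 2 + ι2 p1 * T) (ι1 q1 * T) (C k1 * T))
    (hE3 : E3 = der (ι2 p3 * T) (1 + ι1 q3 * T) (C k3 * T))
    (hE4 : E4 = der (-V * Y ^ 2 + ι2 p4 * T) (ι1 q4 * T) (C k4 * T))
    (h : ModT2 ⁅E1, E3⁆ ((-2 : ℂ) • E4)) :
    k4 = 0 ∧
      -Polynomial.derivative q1 + Polynomial.C k1 * q3 - Polynomial.C k3 * q1 = -2 * q4 := by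
  subst hE1 hE3 hE4
  -- t component
  have h2 := h 2
  have e2 : ((⁅der (-V ^ 2 * Y ^ 2 + ι2 p1 * T) (ι1 q1 * T) (C k1 * T),
        der (ι2 p3 * T) (1 + ι1 q3 * T) (C k3 * T)⁆ -
        (-2 : ℂ) • der (-V * Y ^ 2 + ι2 p4 * T) (ι1 q4 * T) (C k4 * T)) (X 2) : S)
      = ι1 (Polynomial.C (2 * k4)) * T := by
    show _ = _
    rw [show (X 2 : S) = T from rfl]
    simp only [Derivation.sub_apply, Derivation.commutator_apply, der_t, der_v,
      Derivation.leibniz, Derivation.smul_apply, smul_eq_mul,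
      MvPolynomial.smul_eq_C_mul, ι1, Polynomial.aeval_C]
    have hDC : ∀ (D : Derivation ℂ S S) (a : ℂ), D (C a) = 0 := by
      intro D a
      rw [← MvPolynomial.algebraMap_eq]
      exact Derivation.map_algebraMap D a
    simp only [hDC, der_t]
    rw [MvPolynomial.algebraMap_eq]
    simp only [map_neg, map_ofNat, MvPolynomial.C_mul]
    ring
  rw [e2] at h2
  have hk4 := key _ h2
  have hk4' : k4 = 0 := by simpa using hk4
  -- v component
  have h0 := h 0
  have e0 : ((⁅der (-V ^ 2 * Y ^ 2 + ι2 p1 * T) (ι1 q1 * T) (C k1 * T),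
        der (ι2 p3 * T) (1 + ι1 q3 * T) (C k3 * T)⁆ -
        (-2 : ℂ) • der (-V * Y ^ 2 + ι2 p4 * T) (ι1 q4 * T) (C k4 * T)) (X 0) : S)
      = ι1 (Polynomial.C k1 * q3 - Polynomial.derivative q1 - Polynomial.C k3 * q1 + 2 * q4) * T
        + (ι1 (Polynomial.derivative q3) * ι1 q1 - ι1 (Polynomial.derivative q1) * ι1 q3) * T ^ 2 := by
    rw [show (X 0 : S) = V from rfl]
    simp only [Derivation.sub_apply, Derivation.commutator_apply, der_v,
      map_add, Derivation.map_one_eq_zero, Derivation.leibniz, Derivation.smul_apply,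
      smul_eq_mul, MvPolynomial.smul_eq_C_mul, ι1, Derivation.map_aeval, der_t,
      map_mul, map_sub, Polynomial.aeval_C]
    rw [MvPolynomial.algebraMap_eq]
    simp only [map_neg, map_ofNat, MvPolynomial.C_mul]
    ring
  rw [e0] at h0
  have hmem : ι1 (Polynomial.C k1 * q3 - Polynomial.derivative q1 - Polynomial.C k3 * q1 + 2 * q4) * T
      ∈ Ideal.span {T ^ 2} := by
    have hT2 : (T : S) ^ 2 ∈ Ideal.span {T ^ 2} := Ideal.subset_span rfl
    have := Ideal.sub_mem _ h0 (Ideal.mul_mem_left _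
      (ι1 (Polynomial.derivative q3) * ι1 q1 - ι1 (Polynomial.derivative q1) * ι1 q3) hT2)
    simpa using this
  have hA := key _ hmem
  refine ⟨hk4', ?_⟩
  linear_combination hA

end
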